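/- arXiv:2006.07632 — 2 statements merged into one kernel-verified Lean document; each statement's English description precedes it below -/
import Mathlib

section
/- Let G be a finite symmetric graph, λ an eigenvalue of the normalized Laplacian with m-dimensional eigenspace and orthonormal basis {u₁,…,u_m}. Then the function f₃(x,y) := Σ_{α=1}^m u_α(x)(u_α(y) − u_α(x)) defined on adjacent pairs x ∼ y is constant, with value −λm/(2#E). -/
open Finset Real


/-- Normalized Laplace operator of a `d`-regular graph: `Δu(x) = (1/d)·Σ_{y∼x}(u y − u x)`. -/
noncomputable def nlap {V : Type*} [Fintype V] (G : SimpleGraph V) [DecidableRel G.Adj] (d : ℕ)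
    (u : V → ℝ) (x : V) : ℝ :=
  (1 / (d : ℝ)) * ∑ y ∈ G.neighborFinset x, (u y - u x)

/-- `l` is an eigenvalue of the normalized Laplacian: `Δu + l·u = 0` for some `u ≠ 0`. -/
def isEig {V : Type*} [Fintype V] (G : SimpleGraph V) [DecidableRel G.Adj] (d : ℕ)
    (l : ℝ) : Prop :=
  ∃ u : V → ℝ, u ≠ 0 ∧ ∀ x, nlap G d u x + l * u x = 0

lemma helper1 {V : Type*} [Fintype V] (d m : ℕ) (u : Fin m → V → ℝ)
    (horth : ∀ α β, (d : ℝ) * ∑ x, u α x * u β x = if α = β then 1 else 0)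
    (c c' : Fin m → ℝ) :
    (d : ℝ) * ∑ x, (∑ β, c β * u β x) * (∑ β', c' β' * u β' x) = ∑ β, c β * c' β := by
  have step : ∀ β β', (∑ x, (d:ℝ) * (c β * u β x * (c' β' * u β' x)))
      = c β * c' β' * (if β = β' then 1 else 0) := by
    intro β β'
    rw [← horth β β']
    rw [Finset.mul_sum, Finset.mul_sum]
    exact Finset.sum_congr rfl fun x _ => by ring
  calc (d : ℝ) * ∑ x, (∑ β, c β * u β x) * (∑ β', c' β' * u β' x)
      = ∑ x, ∑ β, ∑ β', (d:ℝ) * (c β * u β x * (c' β' * u β' x)) := by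
        rw [Finset.mul_sum]
        refine Finset.sum_congr rfl fun x _ => ?_
        rw [Finset.sum_mul_sum, Finset.mul_sum]
        exact Finset.sum_congr rfl fun β _ => by rw [Finset.mul_sum]
    _ = ∑ β, ∑ β', ∑ x, (d:ℝ) * (c β * u β x * (c' β' * u β' x)) := by
        rw [Finset.sum_comm]
        exact Finset.sum_congr rfl fun β _ => Finset.sum_comm
    _ = ∑ β, ∑ β', c β * c' β' * (if β = β' then 1 else 0) :=
        Finset.sum_congr rfl fun β _ => Finset.sum_congr rfl fun β' _ => step β β'
    _ = ∑ β, c β * c' β := by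
        refine Finset.sum_congr rfl fun β _ => ?_
        simp [mul_ite, Finset.sum_ite_eq]

lemma helper2 {m : ℕ} (C : Fin m → Fin m → ℝ)
    (hC : ∀ β β', ∑ α, C α β * C α β' = if β = β' then 1 else 0)
    (v w : Fin m → ℝ) :
    ∑ α, (∑ β, C α β * v β) * (∑ β', C α β' * w β') = ∑ β, v β * w β := by
  have step : ∀ β β', (∑ α, C α β * v β * (C α β' * w β'))
      = v β * w β' * (if β = β' then 1 else 0) := by
    intro β β'
    rw [← hC β β', Finset.mul_sum]
    exact Finset.sum_congr rfl fun α _ => by ring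
  calc ∑ α, (∑ β, C α β * v β) * (∑ β', C α β' * w β')
      = ∑ α, ∑ β, ∑ β', C α β * v β * (C α β' * w β') := by
        refine Finset.sum_congr rfl fun α _ => ?_
        rw [Finset.sum_mul_sum]
    _ = ∑ β, ∑ β', ∑ α, C α β * v β * (C α β' * w β') := by
        rw [Finset.sum_comm]
        exact Finset.sum_congr rfl fun β _ => Finset.sum_comm
    _ = ∑ β, ∑ β', v β * w β' * (if β = β' then 1 else 0) :=
        Finset.sum_congr rfl fun β _ => Finset.sum_congr rfl fun β' _ => step β β'
    _ = ∑ β, v β * w β := by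
        refine Finset.sum_congr rfl fun β _ => ?_
        simp [mul_ite, Finset.sum_ite_eq]

lemma nbhd_iso {V : Type*} [Fintype V] [DecidableEq V] (G : SimpleGraph V)
    [DecidableRel G.Adj] (γ : G ≃g G) (x : V) :
    G.neighborFinset (γ x) = (G.neighborFinset x).map γ.toEquiv.toEmbedding := by
  ext z
  simp only [Finset.mem_map, SimpleGraph.mem_neighborFinset, Equiv.coe_toEmbedding]
  constructor
  · intro h
    refine ⟨γ.symm z, ?_, by simp⟩
    have := γ.symm.map_adj_iff.mpr h
    simpa using this
  · rintro ⟨a, ha, rfl⟩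
    exact γ.map_adj_iff.mpr ha

lemma nlap_comp {V : Type*} [Fintype V] [DecidableEq V] (G : SimpleGraph V)
    [DecidableRel G.Adj] (d : ℕ) (γ : G ≃g G) (u : V → ℝ) (x : V) :
    nlap G d (fun z => u (γ z)) x = nlap G d u (γ x) := by
  unfold nlap
  rw [nbhd_iso G γ x, Finset.sum_map]
  simp

lemma expand_coeff {V : Type*} [Fintype V] (G : SimpleGraph V) [DecidableRel G.Adj]
    (d m : ℕ) (l : ℝ) (u : Fin m → V → ℝ)
    (hspan : ∀ v : V → ℝ, (∀ z, nlap G d v z + l * v z = 0) →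
      v ∈ Submodule.span ℝ (Set.range u))
    (horth : ∀ α β, (d : ℝ) * ∑ x, u α x * u β x = if α = β then 1 else 0)
    (v : V → ℝ) (hv : ∀ z, nlap G d v z + l * v z = 0) (x : V) :
    v x = ∑ β, ((d : ℝ) * ∑ z, u β z * v z) * u β x := by
  obtain ⟨c, hc⟩ := (Submodule.mem_span_range_iff_exists_fun ℝ).mp (hspan v hv)
  have hvx : ∀ y, v y = ∑ i, c i * u i y := by
    intro y
    rw [← hc]
    simp [Finset.sum_apply]
  have hcoef : ∀ β, (d : ℝ) * ∑ z, u β z * v z = c β := by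
    intro β
    calc (d:ℝ) * ∑ z, u β z * v z
        = ∑ z, ∑ i, (d:ℝ) * (u β z * (c i * u i z)) := by
          rw [Finset.mul_sum]
          refine Finset.sum_congr rfl fun z _ => ?_
          rw [hvx z, Finset.mul_sum, Finset.mul_sum]
      _ = ∑ i, ∑ z, (d:ℝ) * (u β z * (c i * u i z)) := Finset.sum_comm
      _ = ∑ i, c i * ((d:ℝ) * ∑ z, u β z * u i z) := by
          refine Finset.sum_congr rfl fun i _ => ?_
          rw [Finset.mul_sum, Finset.mul_sum]
          exact Finset.sum_congr rfl fun z _ => by ring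
      _ = c β := by
          simp_rw [horth]
          simp
  rw [hvx x]
  exact Finset.sum_congr rfl fun β _ => by rw [hcoef]

/-- On a finite symmetric `d`-regular graph, for an orthonormal basis `u₁,…,u_m` of the
eigenspace of an eigenvalue `l`, the function `f₃(x,y) = Σ_α u_α(x)(u_α(y) − u_α(x))` on
adjacent pairs is constant with value `−l·m/(2·#E)`. -/
theorem stmt_9 {V : Type*} [Fintype V] [DecidableEq V] (G : SimpleGraph V)
    [DecidableRel G.Adj] (d m : ℕ) (hd : 0 < d) (hreg : ∀ x, G.degree x = d)
    (hsym : ∀ ⦃x y x' y' : V⦄, G.Adj x y → G.Adj x' y' →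
      ∃ γ : G ≃g G, γ x = x' ∧ γ y = y')
    (l : ℝ) (hl : isEig G d l)
    (u : Fin m → V → ℝ)
    (hmem : ∀ α, ∀ z, nlap G d (u α) z + l * u α z = 0)
    (hspan : ∀ v : V → ℝ, (∀ z, nlap G d v z + l * v z = 0) →
      v ∈ Submodule.span ℝ (Set.range u))
    (horth : ∀ α β, (d : ℝ) * ∑ x, u α x * u β x = if α = β then 1 else 0) :
    ∀ x y : V, G.Adj x y →
      ∑ α, u α x * (u α y - u α x) = -(l * m) / (2 * G.edgeFinset.card) := by
  have hdR : (d : ℝ) ≠ 0 := Nat.cast_ne_zero.mpr hd.ne'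
  set K : V → V → ℝ := fun x y => ∑ α, u α x * u α y with hK
  -- K is invariant under automorphisms
  have hKinv : ∀ (γ : G ≃g G) (x y : V), K (γ x) (γ y) = K x y := by
    intro γ x y
    set c : Fin m → Fin m → ℝ := fun α β => (d : ℝ) * ∑ z, u β z * u α (γ z) with hcdef
    have heig : ∀ α, ∀ z, nlap G d (fun w => u α (γ w)) z + l * u α (γ z) = 0 := by
      intro α z
      rw [nlap_comp]
      exact hmem α (γ z)
    have hexp : ∀ α w, u α (γ w) = ∑ β, c α β * u β w := by
      intro α w
      exact expand_coeff G d m l u hspan horth (fun w => u α (γ w)) (heig α) w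
    -- rows of c are orthonormal
    have hrow : ∀ α α', ∑ β, c α β * c α' β = if α = α' then 1 else 0 := by
      intro α α'
      have h1 : (d : ℝ) * ∑ z, u α (γ z) * u α' (γ z) = if α = α' then 1 else 0 := by
        have e : ∑ z, u α (γ z) * u α' (γ z) = ∑ z, u α z * u α' z :=
          Equiv.sum_comp γ.toEquiv fun z => u α z * u α' z
        rw [e]
        exact horth α α'
      rw [← h1]
      have := helper1 d m u horth (c α) (c α')
      rw [← this]
      congr 1
      exact Finset.sum_congr rfl fun z _ => by rw [← hexp α z, ← hexp α' z]
    -- columns also orthonormal via matrices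
    have hcol : ∀ β β', ∑ α, c α β * c α β' = if β = β' then 1 else 0 := by
      set C : Matrix (Fin m) (Fin m) ℝ := Matrix.of c with hCdef
      have hCCt : C * C.transpose = 1 := by
        ext α α'
        rw [Matrix.mul_apply]
        simp only [Matrix.transpose_apply, hCdef, Matrix.of_apply]
        rw [hrow α α', Matrix.one_apply]
      have hCtC : C.transpose * C = 1 := mul_eq_one_comm.mp hCCt
      intro β β'
      have := congrFun (congrFun hCtC β) β'
      rw [Matrix.mul_apply] at this
      simp only [Matrix.transpose_apply, hCdef, Matrix.of_apply] at this
      rw [this, Matrix.one_apply]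
    calc K (γ x) (γ y) = ∑ α, (∑ β, c α β * u β x) * (∑ β', c α β' * u β' y) := by
          rw [hK]
          exact Finset.sum_congr rfl fun α _ => by rw [hexp α x, hexp α y]
      _ = ∑ β, u β x * u β y := helper2 c hcol (fun β => u β x) (fun β => u β y)
      _ = K x y := rfl
  intro x y hxy
  -- expansion of f₃ via K
  have hexpand : ∀ a b : V, ∑ α, u α a * (u α b - u α a) = K a b - K a a := by
    intro a b
    rw [hK, ← Finset.sum_sub_distrib]
    exact Finset.sum_congr rfl fun α _ => by ring
  -- constancy on edges
  have hconst : ∀ x' y', G.Adj x' y' →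
      ∑ α, u α x' * (u α y' - u α x') = ∑ α, u α x * (u α y - u α x) := by
    intro x' y' h'
    obtain ⟨γ, hγx, hγy⟩ := hsym hxy h'
    rw [hexpand, hexpand, ← hγx, ← hγy, hKinv, hKinv]
  set c₀ : ℝ := ∑ α, u α x * (u α y - u α x) with hc₀
  -- first evaluation of the edge sum
  have hsum1 : ∑ x' : V, ∑ y' ∈ G.neighborFinset x', (∑ α, u α x' * (u α y' - u α x'))
      = (Fintype.card V : ℝ) * d * c₀ := by
    have hinner : ∀ x' : V,
        ∑ y' ∈ G.neighborFinset x', (∑ α, u α x' * (u α y' - u α x')) = (d : ℝ) * c₀ := by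
      intro x'
      rw [Finset.sum_congr rfl (fun y' hy' =>
        hconst x' y' ((SimpleGraph.mem_neighborFinset G x' y').mp hy'))]
      rw [Finset.sum_const, SimpleGraph.card_neighborFinset_eq_degree, hreg x',
        nsmul_eq_mul]
    rw [Finset.sum_congr rfl (fun x' _ => hinner x'), Finset.sum_const,
      Finset.card_univ, nsmul_eq_mul]
    ring
  -- second evaluation of the edge sum
  have hsum2 : ∑ x' : V, ∑ y' ∈ G.neighborFinset x', (∑ α, u α x' * (u α y' - u α x'))
      = -(l * m) := by
    have hinner : ∀ x' : V,
        ∑ y' ∈ G.neighborFinset x', (∑ α, u α x' * (u α y' - u α x'))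
          = ∑ α, (-(l * d)) * (u α x' * u α x') := by
      intro x'
      rw [Finset.sum_comm]
      refine Finset.sum_congr rfl fun α _ => ?_
      have hS : ∑ y' ∈ G.neighborFinset x', (u α y' - u α x') = (d : ℝ) * nlap G d (u α) x' := by
        rw [nlap]
        field_simp
      have hval : nlap G d (u α) x' = -(l * u α x') := by
        have := hmem α x'
        linarith
      rw [← Finset.mul_sum, hS, hval]
      ring
    rw [Finset.sum_congr rfl (fun x' _ => hinner x'), Finset.sum_comm]
    have : ∀ α : Fin m, ∑ x' : V, (-(l * d)) * (u α x' * u α x') = -l := by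
      intro α
      have h1 : (d : ℝ) * ∑ x', u α x' * u α x' = 1 := by simpa using horth α α
      rw [← Finset.mul_sum]
      calc (-(l * d)) * ∑ x', u α x' * u α x'
          = -l * ((d : ℝ) * ∑ x', u α x' * u α x') := by ring
        _ = -l := by rw [h1]; ring
    rw [Finset.sum_congr rfl (fun α _ => this α), Finset.sum_const, Finset.card_univ,
      nsmul_eq_mul, Fintype.card_fin]
    ring
  -- vertex count times degree equals twice edge count
  have hcount : (Fintype.card V : ℝ) * d = 2 * G.edgeFinset.card := by
    have h := G.sum_degrees_eq_twice_card_edges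
    have h2 : ∑ v : V, G.degree v = Fintype.card V * d := by
      rw [Finset.sum_congr rfl (fun v _ => hreg v), Finset.sum_const, Finset.card_univ,
        smul_eq_mul]
    rw [h2] at h
    exact_mod_cast congrArg (Nat.cast : ℕ → ℝ) h
  have hEpos : (0 : ℝ) < 2 * G.edgeFinset.card := by
    have : s(x, y) ∈ G.edgeFinset := SimpleGraph.mem_edgeFinset.mpr hxy
    have hc : 0 < G.edgeFinset.card := Finset.card_pos.mpr ⟨_, this⟩
    positivity
  have key : (2 * G.edgeFinset.card : ℝ) * c₀ = -(l * m) := by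
    rw [← hcount, ← hsum1, hsum2]
  rw [eq_div_iff hEpos.ne']
  linarith [key]
end

section
/- Let G be a finite d-regular graph with normalized Laplacian eigenvalues λ₀ ≤ ⋯ ≤ λ_{N−1} and orthonormal eigenfunctions u₀,…,u_{N−1}. For any function h on V and any 0 ≤ k ≤ N−2, (1/2)·Σ_{i=0}^k (λ_{k+1} − λ_i)²·Φ_i(h) ≤ Σ_{i=0}^k (λ_{k+1} − λ_i)·‖2Γ(h,u_i) + u_i·Δh‖², where Φ_i(h) = Σ_{x∼y} u_i(x)u_i(y)(h(y) − h(x))². -/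
open Finset Real

/-- Carré du champ operator `Γ(u,v) := (1/2)(Δ(uv) − (Δu)v − u(Δv))`. -/
noncomputable def cdc {V : Type*} [Fintype V] (G : SimpleGraph V) [DecidableRel G.Adj]
    (d : ℕ) (u v : V → ℝ) (x : V) : ℝ :=
  (1 / 2) * (nlap G d (u * v) x - nlap G d u x * v x - u x * nlap G d v x)

section aux
open Matrix
variable {V : Type*} [Fintype V] (G : SimpleGraph V) [DecidableRel G.Adj] (d : ℕ)

lemma sum_nbr (F : V → V → ℝ) :
    ∑ x, ∑ y ∈ G.neighborFinset x, F x y = ∑ x, ∑ y ∈ G.neighborFinset x, F y x := by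
  have h1 : ∀ (x : V) (f : V → ℝ), ∑ y ∈ G.neighborFinset x, f y
      = ∑ y, if G.Adj x y then f y else 0 := by
    intro x f
    rw [SimpleGraph.neighborFinset_eq_filter, Finset.sum_filter]
  simp only [h1]
  rw [Finset.sum_comm]
  refine Finset.sum_congr rfl fun x _ => Finset.sum_congr rfl fun y _ => ?_
  by_cases hxy : G.Adj x y
  · simp [hxy, hxy.symm]
  · rw [if_neg hxy, if_neg (fun h9 : G.Adj y x => hxy h9.symm)]

lemma pair_sum (hreg : ∀ x, G.degree x = d) (f g : V → ℝ) :
    ∑ x, ∑ y ∈ G.neighborFinset x, f y * g x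
      = (d : ℝ) * ∑ x, nlap G d f x * g x + (d : ℝ) * ∑ x, f x * g x := by
  have key : ∀ x, ∑ y ∈ G.neighborFinset x, f y = (d : ℝ) * nlap G d f x + (d : ℝ) * f x := by
    intro x
    have hc : (G.neighborFinset x).card = d := hreg x
    unfold nlap
    rcases Nat.eq_zero_or_pos d with h0 | h0
    · subst h0
      rw [Finset.card_eq_zero] at hc
      simp [hc]
    · have hdne : (d : ℝ) ≠ 0 := by positivity
      rw [Finset.sum_sub_distrib, Finset.sum_const, hc]
      field_simp
      rw [nsmul_eq_mul]; ring
  calc ∑ x, ∑ y ∈ G.neighborFinset x, f y * g x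
      = ∑ x, ((d : ℝ) * nlap G d f x + (d : ℝ) * f x) * g x := by
        refine Finset.sum_congr rfl fun x _ => ?_
        rw [← Finset.sum_mul, key]
    _ = (d : ℝ) * ∑ x, nlap G d f x * g x + (d : ℝ) * ∑ x, f x * g x := by
        rw [Finset.mul_sum, Finset.mul_sum, ← Finset.sum_add_distrib]
        exact Finset.sum_congr rfl fun x _ => by ring

lemma nlap_symm (f g : V → ℝ) :
    ∑ x, nlap G d f x * g x = ∑ x, f x * nlap G d g x := by
  have key : ∑ x, ∑ y ∈ G.neighborFinset x, (f y - f x) * g x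
      = ∑ x, ∑ y ∈ G.neighborFinset x, f x * (g y - g x) := by
    have h1 : ∑ x, ∑ y ∈ G.neighborFinset x, f y * g x
        = ∑ x, ∑ y ∈ G.neighborFinset x, f x * g y := sum_nbr G fun x y => f y * g x
    simp only [sub_mul, mul_sub, Finset.sum_sub_distrib]
    rw [h1]
  unfold nlap
  calc ∑ x, 1 / (d:ℝ) * (∑ y ∈ G.neighborFinset x, (f y - f x)) * g x
      = 1/(d:ℝ) * ∑ x, ∑ y ∈ G.neighborFinset x, (f y - f x) * g x := by
        rw [Finset.mul_sum]
        exact Finset.sum_congr rfl fun x _ => by rw [mul_assoc, Finset.sum_mul]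
    _ = 1/(d:ℝ) * ∑ x, ∑ y ∈ G.neighborFinset x, f x * (g y - g x) := by rw [key]
    _ = ∑ x, f x * (1 / (d:ℝ) * ∑ y ∈ G.neighborFinset x, (g y - g x)) := by
        rw [Finset.mul_sum]
        exact Finset.sum_congr rfl fun x _ => by rw [← Finset.mul_sum, mul_left_comm]

lemma complete {V : Type*} [Fintype V] [DecidableEq V] (d : ℕ) (u : ℕ → V → ℝ)
    (horth : ∀ i j, i < Fintype.card V → j < Fintype.card V →
      (d : ℝ) * ∑ x, u i x * u j x = if i = j then 1 else 0) (x y : V) :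
    ∑ i ∈ Finset.range (Fintype.card V), (d : ℝ) * (u i x * u i y)
      = if x = y then 1 else 0 := by
  classical
  set N := Fintype.card V with hN
  let e : V ≃ Fin N := Fintype.equivFin V
  let M : Matrix (Fin N) (Fin N) ℝ := fun i z => Real.sqrt d * u i (e.symm z)
  have hMMT : M * Mᵀ = 1 := by
    ext i j
    simp only [Matrix.mul_apply, Matrix.transpose_apply, Matrix.one_apply]
    simp only [M]
    have step1 : ∑ z : Fin N, Real.sqrt d * u i (e.symm z) * (Real.sqrt d * u j (e.symm z))
        = ∑ z : Fin N, (d : ℝ) * (u i (e.symm z) * u j (e.symm z)) := by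
      refine Finset.sum_congr rfl fun z _ => ?_
      rw [show Real.sqrt d * u i (e.symm z) * (Real.sqrt d * u j (e.symm z))
          = (Real.sqrt d * Real.sqrt d) * (u i (e.symm z) * u j (e.symm z)) by ring,
        Real.mul_self_sqrt (by positivity)]
    rw [step1, Equiv.sum_comp e.symm (fun v => (d : ℝ) * (u i v * u j v)), ← Finset.mul_sum,
      horth i j i.isLt j.isLt]
    simp [Fin.val_eq_val]
  have hMTM : Mᵀ * M = 1 := mul_eq_one_comm.mp hMMT
  have key := congrFun (congrFun hMTM (e x)) (e y)
  simp only [Matrix.mul_apply, Matrix.transpose_apply, Matrix.one_apply] at key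
  simp only [M,
    Equiv.symm_apply_apply] at key
  rw [← Fin.sum_univ_eq_sum_range (fun i => (d : ℝ) * (u i x * u i y))]
  rw [show (if x = y then (1:ℝ) else 0) = if e x = e y then 1 else 0 by
    simp [EmbeddingLike.apply_eq_iff_eq]]
  rw [← key]
  refine Finset.sum_congr rfl fun i _ => ?_
  rw [show Real.sqrt d * u i x * (Real.sqrt d * u i y)
      = (Real.sqrt d * Real.sqrt d) * (u i x * u i y) by ring,
    Real.mul_self_sqrt (by positivity)]

lemma parseval {V : Type*} [Fintype V] (d : ℕ) (u : ℕ → V → ℝ)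
    (horth : ∀ i j, i < Fintype.card V → j < Fintype.card V →
      (d : ℝ) * ∑ x, u i x * u j x = if i = j then 1 else 0) (f g : V → ℝ) :
    ∑ i ∈ Finset.range (Fintype.card V),
      ((d : ℝ) * ∑ x, f x * u i x) * ((d : ℝ) * ∑ x, g x * u i x)
      = (d : ℝ) * ∑ x, f x * g x := by
  classical
  have step1 : ∀ i, ((d : ℝ) * ∑ x, f x * u i x) * ((d : ℝ) * ∑ x, g x * u i x)
      = ∑ x, ∑ y, (f x * g y * (d : ℝ)) * ((d : ℝ) * (u i x * u i y)) := by
    intro i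
    rw [show ((d : ℝ) * ∑ x, f x * u i x) * ((d : ℝ) * ∑ x, g x * u i x)
        = (∑ x, (d : ℝ) * (f x * u i x)) * (∑ x, (d : ℝ) * (g x * u i x)) by
      rw [← Finset.mul_sum, ← Finset.mul_sum]]
    rw [Finset.sum_mul_sum]
    refine Finset.sum_congr rfl fun x _ => Finset.sum_congr rfl fun y _ => by ring
  simp only [step1]
  rw [Finset.sum_comm]
  have step2 : ∀ x : V, ∑ i ∈ Finset.range (Fintype.card V),
      ∑ y, (f x * g y * (d : ℝ)) * ((d : ℝ) * (u i x * u i y)) = (d:ℝ) * (f x * g x) := by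
    intro x
    rw [Finset.sum_comm]
    have : ∀ y : V, ∑ i ∈ Finset.range (Fintype.card V),
        (f x * g y * (d : ℝ)) * ((d : ℝ) * (u i x * u i y))
        = f x * g y * (d : ℝ) * (if x = y then 1 else 0) := by
      intro y
      rw [← Finset.mul_sum, complete d u horth x y]
    simp only [this, mul_ite, mul_one, mul_zero]
    rw [Finset.sum_ite_eq Finset.univ x (fun y => f x * g y * (d:ℝ))]
    simp [mul_comm]
  simp only [step2]
  rw [← Finset.mul_sum]

end aux

/-- Key lemma: for any `h : V → ℝ` and `0 ≤ k ≤ N−2`,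
`(1/2)·Σ_{i=0}^k (λ_{k+1}−λ_i)²·Φ_i(h) ≤ Σ_{i=0}^k (λ_{k+1}−λ_i)·‖2Γ(h,u_i)+u_iΔh‖²`,
where `Φ_i(h) = Σ_{x∼y} u_i(x)u_i(y)(h(y)−h(x))²` and `‖v‖² = d·Σ_x v(x)²`. -/
theorem stmt_17 {V : Type*} [Fintype V] (G : SimpleGraph V) [DecidableRel G.Adj]
    (d : ℕ) (hd : 0 < d) (hconn : G.Connected) (hreg : ∀ x, G.degree x = d)
    (lam : ℕ → ℝ) (u : ℕ → V → ℝ)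
    (hmono : ∀ i j, i ≤ j → j < Fintype.card V → lam i ≤ lam j)
    (horth : ∀ i j, i < Fintype.card V → j < Fintype.card V →
      (d : ℝ) * ∑ x, u i x * u j x = if i = j then 1 else 0)
    (heig : ∀ i, i < Fintype.card V → ∀ x, nlap G d (u i) x + lam i * u i x = 0)
    (h : V → ℝ) :
    ∀ k, k + 1 < Fintype.card V →
      (1 / 2) * ∑ i ∈ Finset.range (k + 1), (lam (k + 1) - lam i) ^ 2 *
          (∑ x, ∑ y ∈ G.neighborFinset x, u i x * u i y * (h y - h x) ^ 2) ≤
        ∑ i ∈ Finset.range (k + 1), (lam (k + 1) - lam i) *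
          ((d : ℝ) * ∑ x, (2 * cdc G d h (u i) x + u i x * nlap G d h x) ^ 2) := by
  intro k hk
  classical
  set N := Fintype.card V with hN
  set μ := lam (k + 1) with hμ
  set a : ℕ → ℕ → ℝ := fun i j => (d : ℝ) * ∑ x, (h x * u i x) * u j x with ha
  have heig' : ∀ i, i < N → ∀ x, nlap G d (u i) x = -(lam i * u i x) := by
    intro i hi x; have := heig i hi x; linarith
  have hasym : ∀ i j, a i j = a j i := by
    intro i j
    simp only [ha]
    congr 1
    exact Finset.sum_congr rfl fun x _ => by ring
  -- coefficients of the function w i := Δ(h·uᵢ) + λᵢ·h·uᵢ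
  have hc : ∀ i, i < N → ∀ j, j < N →
      (d : ℝ) * ∑ x, (nlap G d (h * u i) x + lam i * (h x * u i x)) * u j x
        = (lam i - lam j) * a i j := by
    intro i hi j hj
    have h2 : ∑ x, nlap G d (h * u i) x * u j x
        = -(lam j * ∑ x, (h x * u i x) * u j x) := by
      rw [nlap_symm G d (h * u i) (u j)]
      calc ∑ x, (h * u i) x * nlap G d (u j) x
          = ∑ x, -(lam j * ((h x * u i x) * u j x)) := by
            refine Finset.sum_congr rfl fun x _ => ?_
            rw [heig' j hj x]; simp only [Pi.mul_apply]; ring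
        _ = -(lam j * ∑ x, (h x * u i x) * u j x) := by
            rw [Finset.sum_neg_distrib, Finset.mul_sum]
    have h1 : ∑ x, (nlap G d (h * u i) x + lam i * (h x * u i x)) * u j x
        = ∑ x, nlap G d (h * u i) x * u j x + lam i * ∑ x, (h x * u i x) * u j x := by
      rw [Finset.mul_sum, ← Finset.sum_add_distrib]
      exact Finset.sum_congr rfl fun x _ => by ring
    rw [h1, h2]
    simp only [ha]
    ring
  -- norm identity for w i
  have hnorm : ∀ i, i < N →
      (d : ℝ) * ∑ x, (2 * cdc G d h (u i) x + u i x * nlap G d h x) ^ 2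
        = ∑ j ∈ Finset.range N, ((lam i - lam j) * a i j) ^ 2 := by
    intro i hi
    have hw : ∀ x, 2 * cdc G d h (u i) x + u i x * nlap G d h x
        = nlap G d (h * u i) x + lam i * (h x * u i x) := by
      intro x
      unfold cdc
      rw [heig' i hi x]
      ring
    have e1 : (d : ℝ) * ∑ x, (2 * cdc G d h (u i) x + u i x * nlap G d h x) ^ 2
        = (d : ℝ) * ∑ x, (fun x => nlap G d (h * u i) x + lam i * (h x * u i x)) x
            * (fun x => nlap G d (h * u i) x + lam i * (h x * u i x)) x := by
      congr 1
      refine Finset.sum_congr rfl fun x _ => ?_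
      rw [hw x]; ring
    rw [e1, ← parseval d u horth _ _]
    refine Finset.sum_congr rfl fun j hj => ?_
    have hj' : j < N := Finset.mem_range.mp hj
    rw [hc i hi j hj']
    ring
  -- the Φ identity
  have hphi : ∀ i, i < N →
      ∑ x, ∑ y ∈ G.neighborFinset x, u i x * u i y * (h y - h x) ^ 2
        = 2 * ∑ j ∈ Finset.range N, (lam j - lam i) * (a i j) ^ 2 := by
    intro i hi
    set g : V → ℝ := h * u i with hg
    set p : V → ℝ := h * (h * u i) with hp
    have expand : ∑ x, ∑ y ∈ G.neighborFinset x, u i x * u i y * (h y - h x) ^ 2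
        = (∑ x, ∑ y ∈ G.neighborFinset x, p y * u i x)
          - 2 * (∑ x, ∑ y ∈ G.neighborFinset x, g y * g x)
          + ∑ x, ∑ y ∈ G.neighborFinset x, u i y * p x := by
      rw [Finset.mul_sum, ← Finset.sum_sub_distrib, ← Finset.sum_add_distrib]
      refine Finset.sum_congr rfl fun x _ => ?_
      rw [Finset.mul_sum, ← Finset.sum_sub_distrib, ← Finset.sum_add_distrib]
      refine Finset.sum_congr rfl fun y _ => ?_
      simp only [hg, hp, Pi.mul_apply]
      ring
    rw [expand, pair_sum G d hreg p (u i), pair_sum G d hreg g g, pair_sum G d hreg (u i) p]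
    have f1 : ∑ x, nlap G d p x * u i x = -(lam i) * ∑ x, g x * g x := by
      rw [nlap_symm G d p (u i), Finset.mul_sum]
      refine Finset.sum_congr rfl fun x _ => ?_
      rw [heig' i hi x]
      simp only [hg, hp, Pi.mul_apply]
      ring
    have f2 : ∑ x, p x * u i x = ∑ x, g x * g x := by
      refine Finset.sum_congr rfl fun x _ => ?_
      simp only [hg, hp, Pi.mul_apply]; ring
    have f3 : ∑ x, nlap G d (u i) x * p x = -(lam i) * ∑ x, g x * g x := by
      rw [Finset.mul_sum]
      refine Finset.sum_congr rfl fun x _ => ?_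
      rw [heig' i hi x]
      simp only [hg, hp, Pi.mul_apply]
      ring
    have f4 : ∑ x, u i x * p x = ∑ x, g x * g x := by
      refine Finset.sum_congr rfl fun x _ => ?_
      simp only [hg, hp, Pi.mul_apply]; ring
    have f5 : (d : ℝ) * ∑ x, g x * g x = ∑ j ∈ Finset.range N, (a i j) ^ 2 := by
      rw [← parseval d u horth g g]
      refine Finset.sum_congr rfl fun j hj => ?_
      have e : (d : ℝ) * ∑ x, g x * u j x = a i j := by
        simp only [hg, ha, Pi.mul_apply]
      rw [e]; ring
    have f6 : (d : ℝ) * ∑ x, nlap G d g x * g x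
        = ∑ j ∈ Finset.range N, -(lam j) * (a i j) ^ 2 := by
      rw [← parseval d u horth (nlap G d g) g]
      refine Finset.sum_congr rfl fun j hj => ?_
      have hj' : j < N := Finset.mem_range.mp hj
      have e1 : (d : ℝ) * ∑ x, nlap G d g x * u j x = -(lam j) * a i j := by
        rw [nlap_symm G d g (u j)]
        have : ∑ x, g x * nlap G d (u j) x = ∑ x, -(lam j * ((h x * u i x) * u j x)) := by
          refine Finset.sum_congr rfl fun x _ => ?_
          rw [heig' j hj' x]
          simp only [hg, Pi.mul_apply]
          ring
        rw [this, Finset.sum_neg_distrib, ← Finset.mul_sum]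
        simp only [ha]
        ring
      have e2 : (d : ℝ) * ∑ x, g x * u j x = a i j := by
        simp only [hg, ha, Pi.mul_apply]
      rw [e1, e2]; ring
    have hsplit : 2 * ∑ j ∈ Finset.range N, (lam j - lam i) * (a i j) ^ 2
        = -2 * lam i * (∑ j ∈ Finset.range N, (a i j) ^ 2)
          - 2 * (∑ j ∈ Finset.range N, -(lam j) * (a i j) ^ 2) := by
      rw [Finset.mul_sum, Finset.mul_sum, Finset.mul_sum, ← Finset.sum_sub_distrib]
      exact Finset.sum_congr rfl fun j _ => by ring
    rw [f1, f2, f3, f4, hsplit, ← f5, ← f6]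
    ring
  -- rewrite both sides as double sums over coefficients
  have hhalf : ∀ c S : ℝ, (1/2) * (c * (2*S)) = c * S := fun c S => by ring
  have hL : (1/2) * ∑ i ∈ Finset.range (k+1), (μ - lam i)^2 *
        (∑ x, ∑ y ∈ G.neighborFinset x, u i x * u i y * (h y - h x)^2)
      = ∑ i ∈ Finset.range (k+1), ∑ j ∈ Finset.range N,
          (μ - lam i)^2 * ((lam j - lam i) * (a i j)^2) := by
    rw [Finset.mul_sum]
    refine Finset.sum_congr rfl fun i hi => ?_
    have hi' : i < N := lt_trans (Finset.mem_range.mp hi) hk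
    rw [hphi i hi', hhalf, Finset.mul_sum]
  have hR : ∑ i ∈ Finset.range (k+1), (μ - lam i) *
        ((d : ℝ) * ∑ x, (2 * cdc G d h (u i) x + u i x * nlap G d h x)^2)
      = ∑ i ∈ Finset.range (k+1), ∑ j ∈ Finset.range N,
          (μ - lam i) * ((lam i - lam j) * a i j)^2 := by
    refine Finset.sum_congr rfl fun i hi => ?_
    have hi' : i < N := lt_trans (Finset.mem_range.mp hi) hk
    rw [hnorm i hi', Finset.mul_sum]
  have key : 0 ≤ ∑ i ∈ Finset.range (k+1), ∑ j ∈ Finset.range N,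
      (μ - lam i) * ((lam j - lam i) * ((lam j - μ) * (a i j)^2)) := by
    have hsplitj : ∀ i, ∑ j ∈ Finset.range N,
          (μ - lam i) * ((lam j - lam i) * ((lam j - μ) * (a i j)^2))
        = (∑ j ∈ Finset.range (k+1),
            (μ - lam i) * ((lam j - lam i) * ((lam j - μ) * (a i j)^2)))
          + ∑ j ∈ Finset.Ico (k+1) N,
            (μ - lam i) * ((lam j - lam i) * ((lam j - μ) * (a i j)^2)) := by
      intro i
      rw [Finset.range_eq_Ico,
        ← Finset.sum_Ico_consecutive _ (Nat.zero_le (k+1)) (le_of_lt hk),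
        ← Finset.range_eq_Ico]
    simp only [hsplitj]
    rw [Finset.sum_add_distrib]
    have hS1 : ∑ i ∈ Finset.range (k+1), ∑ j ∈ Finset.range (k+1),
        (μ - lam i) * ((lam j - lam i) * ((lam j - μ) * (a i j)^2)) = 0 := by
      have comm : ∑ i ∈ Finset.range (k+1), ∑ j ∈ Finset.range (k+1),
            (μ - lam i) * ((lam j - lam i) * ((lam j - μ) * (a i j)^2))
          = ∑ i ∈ Finset.range (k+1), ∑ j ∈ Finset.range (k+1),
            -((μ - lam i) * ((lam j - lam i) * ((lam j - μ) * (a i j)^2))) := by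
        rw [Finset.sum_comm]
        refine Finset.sum_congr rfl fun i _ => Finset.sum_congr rfl fun j _ => ?_
        rw [hasym j i]
        ring
      rw [Finset.sum_congr rfl fun i _ => Finset.sum_neg_distrib _,
        Finset.sum_neg_distrib] at comm
      linarith
    have hS2 : 0 ≤ ∑ i ∈ Finset.range (k+1), ∑ j ∈ Finset.Ico (k+1) N,
        (μ - lam i) * ((lam j - lam i) * ((lam j - μ) * (a i j)^2)) := by
      refine Finset.sum_nonneg fun i hi => Finset.sum_nonneg fun j hj => ?_
      have hi' : i < k+1 := Finset.mem_range.mp hi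
      obtain ⟨hj1, hj2⟩ := Finset.mem_Ico.mp hj
      have t1 : 0 ≤ μ - lam i := by
        have := hmono i (k+1) (le_of_lt hi') hk
        rw [hμ]; linarith
      have t2 : 0 ≤ lam j - lam i := by
        have := hmono i j (le_trans (le_of_lt hi') hj1) hj2
        linarith
      have t3 : 0 ≤ lam j - μ := by
        have := hmono (k+1) j hj1 hj2
        rw [hμ]; linarith
      exact mul_nonneg t1 (mul_nonneg t2 (mul_nonneg t3 (sq_nonneg _)))
    linarith
  have hdiff : (∑ i ∈ Finset.range (k+1), ∑ j ∈ Finset.range N,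
        (μ - lam i) * ((lam i - lam j) * a i j)^2)
      - ∑ i ∈ Finset.range (k+1), ∑ j ∈ Finset.range N,
        (μ - lam i)^2 * ((lam j - lam i) * (a i j)^2)
      = ∑ i ∈ Finset.range (k+1), ∑ j ∈ Finset.range N,
        (μ - lam i) * ((lam j - lam i) * ((lam j - μ) * (a i j)^2)) := by
    rw [← Finset.sum_sub_distrib]
    refine Finset.sum_congr rfl fun i _ => ?_
    rw [← Finset.sum_sub_distrib]
    exact Finset.sum_congr rfl fun j _ => by ring
  rw [hL, hR]
  linarith
end
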